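/- Let B and A be directed algebras, Λ = 𝒜(B, A^op), let P• → 𝕃 be a minimal projective resolution of the direct sum 𝕃 of simple B-modules, and let D^B = End_B(P•) and D^Λ = End_Λ(F(P•)) with differentials ∂^B, ∂^Λ, where F = Λ ⊗_B −. Then for every f ∈ D^B: (i) F(∂^B(f)) = ∂^Λ(F(f)); (ii) ∂^B(f) = 0 if and only if ∂^Λ(F(f)) = 0; and (iii) f ∈ im ∂^B if and only if F(f) ∈ im ∂^Λ. -/
import Mathlib


noncomputable section

universe u

/-- Data of a complete set of orthogonal idempotents indexed by the vertices `Fin n`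
of a quiver, inside a `K`-algebra. -/
structure IdemData (K : Type u) [Field K] (n : ℕ) (B : Type u) [Ring B] [Algebra K B] where
  e : Fin n → B
  orth : ∀ i j, e i * e j = if i = j then e i else 0
  complete : ∑ i, e i = 1

namespace IdemData

variable {K : Type u} [Field K] {n : ℕ} {B : Type u} [Ring B] [Algebra K B]

/-- Membership in the radical of a directed algebra: all "diagonal components" vanish.
For a directed (triangular, basic) algebra this is exactly the Jacobson radical. -/
def IsRad (d : IdemData K n B) (b : B) : Prop := ∀ i, d.e i * b * d.e i = 0

/-- A directed algebra: finite dimensional, basic, whose (Gabriel) quiver is acyclic with all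
arrows `i ⟶ j` satisfying `i < j`.  Equivalently: `e j * B * e i = 0` for `j < i` and the
"diagonal" components `e i * B * e i` are one-dimensional. -/
def Directed (d : IdemData K n B) : Prop :=
  FiniteDimensional K B ∧
  (∀ i j : Fin n, j < i → ∀ b : B, d.e j * b * d.e i = 0) ∧
  (∀ i : Fin n, ∀ b : B, ∃ c : K, d.e i * b * d.e i = c • d.e i)

/-- The opposite of a directed algebra (all arrows decrease); `A^op` for `A` directed. -/
def Codirected (d : IdemData K n B) : Prop :=
  FiniteDimensional K B ∧
  (∀ i j : Fin n, i < j → ∀ b : B, d.e j * b * d.e i = 0) ∧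
  (∀ i : Fin n, ∀ b : B, ∃ c : K, d.e i * b * d.e i = c • d.e i)

/-- The indecomposable projective left module `P(i) = B·e i`, realized as the left ideal
`{x | x * e i = x}`. -/
def proj (d : IdemData K n B) (i : Fin n) : Submodule B B where
  carrier := {x | x * d.e i = x}
  add_mem' := by
    intro a b ha hb
    simp only [Set.mem_setOf_eq] at *
    rw [add_mul, ha, hb]
  zero_mem' := by simp
  smul_mem' := by
    intro c x hx
    simp only [Set.mem_setOf_eq, smul_eq_mul] at *
    rw [mul_assoc, hx]

end IdemData

/-- The bilinear "multiplication" map `C ⊗ B → Λ`, `(c, b) ↦ ιC c * ιB b`. -/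
def dualBil {K : Type u} [Field K] {B C L : Type u} [Ring B] [Algebra K B] [Ring C] [Algebra K C]
    [Ring L] [Algebra K L] (ιB : B →ₐ[K] L) (ιC : C →ₐ[K] L) : C →ₗ[K] B →ₗ[K] L :=
  LinearMap.mk₂ K (fun c b => ιC c * ιB b)
    (fun c c' b => by simp only [map_add, add_mul])
    (fun k c b => by simp only [map_smul, smul_mul_assoc])
    (fun c b b' => by simp only [map_add, mul_add])
    (fun k c b => by simp only [map_smul, mul_smul_comm])

/-- `Λ` is the dual extension algebra `𝒜(B, C)` of `B` and `C` (in the paper `C = A^op`):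
`B` and `C` embed as subalgebras, sharing the idempotents; the product of a radical element of
`B` with a radical element of `C` (in this order; i.e. all paths `α β'`) vanishes; and the
products `ιC c * ιB b` span `Λ`, the only linear relations among them being the ones forced by
`ιC (c e_i) * ιB (e_j b) = 0` for `i ≠ j`.  This encodes `Λ ≅ ⊕_i C e_i ⊗ e_i B` as in
`Definition 2.1` of the paper. -/
structure DualExt (K : Type u) [Field K] (n : ℕ) (B C L : Type u) [Ring B] [Algebra K B]
    [Ring C] [Algebra K C] [Ring L] [Algebra K L]
    (dB : IdemData K n B) (dC : IdemData K n C) where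
  ιB : B →ₐ[K] L
  ιC : C →ₐ[K] L
  injB : Function.Injective ιB
  injC : Function.Injective ιC
  idem : ∀ i, ιB (dB.e i) = ιC (dC.e i)
  radMul : ∀ b c, dB.IsRad b → dC.IsRad c → ιB b * ιC c = 0
  spans : Submodule.span K {x : L | ∃ c b, x = ιC c * ιB b} = ⊤
  mulKer : LinearMap.ker (TensorProduct.lift (dualBil ιB ιC)) =
    Submodule.span K {x : TensorProduct K C B |
      ∃ i j : Fin n, i ≠ j ∧ ∃ c b, x = (c * dC.e i) ⊗ₜ[K] (dB.e j * b)}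

/-- The left ideal `{x | x * a = x}`; for an idempotent `a = e i` this is the
indecomposable projective module `P(i) = B e i`. -/
def leftIdeal {L : Type u} [Ring L] (a : L) : Submodule L L where
  carrier := {x | x * a = x}
  add_mem' := by
    intro x y hx hy
    simp only [Set.mem_setOf_eq] at *
    rw [add_mul, hx, hy]
  zero_mem' := by simp
  smul_mem' := by
    intro c x hx
    simp only [Set.mem_setOf_eq, smul_eq_mul] at *
    rw [mul_assoc, hx]

/-- A (ℤ-graded) dg-algebra of endomorphisms of a complex: the algebra `D` (modelling
`End(P•)` of a complex of projectives, whose elements are homogeneous graded endomorphisms,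
not necessarily chain maps) with an internal grading, containing the differential of the
complex as a degree-one square-zero element `d`, and with the differential
`∂ f = d f − (−1)^{|f|} f d`. -/
structure DGA (K : Type u) [Field K] (D : Type u) [Ring D] [Algebra K D] where
  gr : ℤ → Submodule K D
  internal : DirectSum.IsInternal gr
  one_mem : (1 : D) ∈ gr 0
  mul_mem : ∀ {a b : ℤ} {x y : D}, x ∈ gr a → y ∈ gr b → x * y ∈ gr (a + b)
  d : D
  d_mem : d ∈ gr 1
  d_sq : d * d = 0
  der : D →ₗ[K] D
  der_apply : ∀ (a : ℤ) (x : D), x ∈ gr a →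
    der x = d * x - ((Int.negOnePow a : ℤ) • (x * d))

/-- Merkulov's construction (following Lu–Palmieri–Wu–Zhang; Section 6 of the paper):
a decomposition `D = H ⊕ im ∂ ⊕ L`, where `H` consists of cycles and realizes the homology
(`H ≅ Ext*`), together with the projection `p : D → H`, the homotopy `h` (zero on `H ⊕ L`,
`∂⁻¹` on `im ∂`), the inductively defined maps
`λ₂ = multiplication`, `λ_n = Σ_{r+s=n, s ≥ 1} (−1)^{s+1} λ₂(hλ_r ⊗ hλ_s)` (`hλ₁ = −id`),
and the resulting `A∞`-multiplications `m_n = p ∘ λ_n ∘ i^{⊗n}` on `H ≅ Ext*`.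
Tuples are written `(ε_n, …, ε_1)` with `v 0 = ε_1` the first map to be composed. -/
structure Merkulov (K : Type u) [Field K] (D : Type u) [Ring D] [Algebra K D]
    (E : DGA K D) where
  H : ℤ → Submodule K D
  L : ℤ → Submodule K D
  H_le : ∀ a, H a ≤ E.gr a
  L_le : ∀ a, L a ≤ E.gr a
  H_cycle : ∀ a, ∀ x ∈ H a, E.der x = 0
  L_reg : ∀ a, ∀ x ∈ L a, E.der x = 0 → x = 0
  decomp : ∀ (a : ℤ), ∀ x ∈ E.gr a,
    ∃ xh ∈ H a, ∃ y ∈ L (a - 1), ∃ xl ∈ L a, x = xh + E.der y + xl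
  indep : ∀ (a : ℤ), ∀ xh ∈ H a, ∀ y ∈ L (a - 1), ∀ xl ∈ L a,
    xh + E.der y + xl = 0 → xh = 0 ∧ E.der y = 0 ∧ xl = 0
  p : D →ₗ[K] D
  p_H : ∀ a, ∀ x ∈ H a, p x = x
  p_bdry : ∀ x : D, p (E.der x) = 0
  p_L : ∀ a, ∀ x ∈ L a, p x = 0
  h : D →ₗ[K] D
  h_H : ∀ a, ∀ x ∈ H a, h x = 0
  h_L : ∀ a, ∀ x ∈ L a, h x = 0
  h_inv : ∀ a, ∀ x ∈ L a, h (E.der x) = x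
  lam : ∀ k : ℕ, (Fin k → D) → D
  lam_two : ∀ v : Fin 2 → D, lam 2 v = v 1 * v 0
  lam_rec : ∀ k : ℕ, 3 ≤ k → ∀ v : Fin k → D, lam k v =
    ∑ s ∈ (Finset.Ioo 0 k).attach,
      ((-1 : ℤ) ^ ((s : ℕ) + 1)) •
        ((if (k - (s : ℕ)) = 1 then
            -(v ⟨(s : ℕ), by have := Finset.mem_Ioo.mp s.property; omega⟩)
          else h (lam (k - (s : ℕ)) (fun i : Fin (k - (s : ℕ)) =>
            v ⟨(s : ℕ) + (i : ℕ), by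
              have := Finset.mem_Ioo.mp s.property
              have := i.isLt
              omega⟩))) *
         (if (s : ℕ) = 1 then
            -(v ⟨0, by have := Finset.mem_Ioo.mp s.property; omega⟩)
          else h (lam (s : ℕ) (fun i : Fin (s : ℕ) =>
            v ⟨(i : ℕ), by
              have := Finset.mem_Ioo.mp s.property
              have := i.isLt
              omega⟩))))
  m : ∀ k : ℕ, (Fin k → D) → D
  m_def : ∀ (k : ℕ) (v : Fin k → D), m k v = p (lam k v)

namespace DGA

variable {K : Type u} [Field K] {D : Type u} [Ring D] [Algebra K D]

/-- Induction principle over the internal grading of a `DGA`. -/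
theorem gr_induction (E : DGA K D) {C : D → Prop} (x : D)
    (hp : ∀ (a : ℤ), ∀ y ∈ E.gr a, C y) (h0 : C 0)
    (hadd : ∀ y z, C y → C z → C (y + z)) : C x := by
  have hx : x ∈ ⨆ a, E.gr a := by
    rw [E.internal.submodule_iSup_eq_top]; trivial
  exact Submodule.iSup_induction (x := x) E.gr hx hp h0 hadd

/-- The projection onto the degree-`a` component of the internal grading. -/
noncomputable def pi (E : DGA K D) (a : ℤ) : D →ₗ[K] D :=
  (E.gr a).subtype ∘ₗ
    (DirectSum.component K ℤ (fun b => ↥(E.gr b)) a) ∘ₗ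
    (LinearEquiv.ofBijective (DirectSum.coeLinearMap E.gr) E.internal).symm.toLinearMap

theorem pi_mem (E : DGA K D) (a : ℤ) (x : D) : E.pi a x ∈ E.gr a :=
  SetLike.coe_mem _

theorem pi_of_mem (E : DGA K D) {a : ℤ} {x : D} (hx : x ∈ E.gr a) : E.pi a x = x := by
  simp only [pi, LinearMap.comp_apply, LinearEquiv.coe_toLinearMap, Submodule.subtype_apply,
    ← DirectSum.apply_eq_component]
  rw [E.internal.ofBijective_coeLinearMap_of_mem hx]

theorem pi_of_mem_ne (E : DGA K D) {a b : ℤ} (hba : b ≠ a) {x : D} (hx : x ∈ E.gr b) :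
    E.pi a x = 0 := by
  simp only [pi, LinearMap.comp_apply, LinearEquiv.coe_toLinearMap, Submodule.subtype_apply,
    ← DirectSum.apply_eq_component]
  rw [E.internal.ofBijective_coeLinearMap_of_mem_ne hba hx, Submodule.coe_zero]

theorem pi_mul_left (E : DGA K D) {u : D} (hu : u ∈ E.gr 0) (a : ℤ) (x : D) :
    E.pi a (u * x) = u * E.pi a x := by
  induction x using E.gr_induction with
  | hp b y hy =>
    have huy : u * y ∈ E.gr b := by simpa using E.mul_mem hu hy
    by_cases hba : b = a
    · subst hba
      rw [E.pi_of_mem huy, E.pi_of_mem hy]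
    · rw [E.pi_of_mem_ne hba huy, E.pi_of_mem_ne hba hy, mul_zero]
  | h0 => simp
  | hadd y z hy hz => rw [mul_add, map_add, map_add, hy, hz, mul_add]

/-- The inverse of a degree-zero unit is again of degree zero. -/
theorem inv_mem_gr_zero (E : DGA K D) (ψ : Dˣ) (hψ : (ψ : D) ∈ E.gr 0) :
    (↑ψ⁻¹ : D) ∈ E.gr 0 := by
  have h1 : (ψ : D) * E.pi 0 ↑ψ⁻¹ = 1 := by
    rw [← E.pi_mul_left hψ, Units.mul_inv, E.pi_of_mem E.one_mem]
  have : (↑ψ⁻¹ : D) = E.pi 0 ↑ψ⁻¹ := by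
    calc (↑ψ⁻¹ : D) = ↑ψ⁻¹ * ((ψ : D) * E.pi 0 ↑ψ⁻¹) := by rw [h1, mul_one]
    _ = E.pi 0 ↑ψ⁻¹ := by rw [← mul_assoc, Units.inv_mul, one_mul]
  rw [this]
  exact E.pi_mem 0 _

end DGA

/-- Lemma 6.4 of the paper.
Let `B` and `A` be directed algebras, `Λ = 𝒜(B, A^op)`, `P• → 𝕃` a minimal projective
resolution of the sum of the simple `B`-modules, `D^B = End_B(P•)` and
`D^Λ = End_Λ(F(P•))` the dg-algebras of graded endomorphisms with differentials
`∂(f) = d f − (−1)^{|f|} f d`, where `F = Λ ⊗_B −`.  These are modelled here by the abstract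
dg-endomorphism-algebra data `EB`, `EΛ`; the functor `F` induces an injective algebra
homomorphism `f ↦ id_Λ ⊗ f` preserving degrees and sending the differential `d` of `P•` to
that of `F(P•)`, and the natural isomorphism `G ∘ F ≅ Id` (for `G = B ⊗_Λ −`) yields an
algebra homomorphism `G : D^Λ → D^B` with `G(F(f)) = ψ⁻¹ f ψ` for an invertible degree-zero
element `ψ`.  Then for every `f ∈ D^B`:
(i)   `F(∂^B f) = ∂^Λ(F f)`;
(ii)  `∂^B f = 0` if and only if `∂^Λ(F f) = 0`;
(iii) `f ∈ im ∂^B` if and only if `F f ∈ im ∂^Λ`. -/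
theorem statement9
    (K : Type) [Field K] [IsAlgClosed K] (n : ℕ)
    (B C L : Type) [Ring B] [Algebra K B] [Ring C] [Algebra K C] [Ring L] [Algebra K L]
    (dB : IdemData K n B) (dC : IdemData K n C)
    (hB : dB.Directed) (hC : dC.Codirected)
    (DEx : DualExt K n B C L dB dC)
    -- the dg endomorphism algebras `D^B = End_B(P•)` and `D^Λ = End_Λ(F(P•))`
    (DB DL : Type) [Ring DB] [Algebra K DB] [Ring DL] [Algebra K DL]
    (EB : DGA K DB) (EL : DGA K DL)
    -- the map induced by the exact functor `F = Λ ⊗_B −`, `f ↦ id_Λ ⊗ f`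
    (F : DB →ₐ[K] DL) (hFinj : Function.Injective F)
    (hFgr : ∀ (a : ℤ) (x : DB), x ∈ EB.gr a → F x ∈ EL.gr a)
    (hFd : F EB.d = EL.d)
    -- the map induced by `G = B ⊗_Λ −`, with `G ∘ F ≅ Id_{B-mod}` realized by conjugation
    -- with an invertible degree-zero element `ψ`
    (G : DL →ₐ[K] DB) (hGgr : ∀ (a : ℤ) (x : DL), x ∈ EL.gr a → G x ∈ EB.gr a)
    (ψ : DBˣ) (hψ : (ψ : DB) ∈ EB.gr 0)
    (hGF : ∀ f : DB, G (F f) = (↑ψ⁻¹ : DB) * f * ψ) :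
    ∀ f : DB,
      (F (EB.der f) = EL.der (F f)) ∧
      (EB.der f = 0 ↔ EL.der (F f) = 0) ∧
      (f ∈ LinearMap.range EB.der ↔ F f ∈ LinearMap.range EL.der) := by
  intro f
  -- (i)
  have hi : ∀ x : DB, F (EB.der x) = EL.der (F x) := by
    intro x
    induction x using EB.gr_induction with
    | hp a y hy =>
      rw [EB.der_apply a y hy, EL.der_apply a (F y) (hFgr a y hy)]
      rw [map_sub, map_mul, map_zsmul, map_mul, hFd]
    | h0 => simp
    | hadd y z hy hz => rw [map_add, map_add, map_add, hy, hz, ← map_add, ← map_add]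
  refine ⟨hi f, ?_, ?_⟩
  · constructor
    · intro h; rw [← hi, h, map_zero]
    · intro h
      apply hFinj
      rw [hi, h, map_zero]
  · -- (iii)
    have hψinv : (↑ψ⁻¹ : DB) ∈ EB.gr 0 := EB.inv_mem_gr_zero ψ hψ
    have hGd : G EL.d = ↑ψ⁻¹ * EB.d * ψ := by rw [← hFd, hGF]
    have hder : ∀ y : DL, (ψ : DB) * G (EL.der y) * ↑ψ⁻¹ =
        EB.der ((ψ : DB) * G y * ↑ψ⁻¹) := by
      intro y
      induction y using EL.gr_induction with
      | hp a z hz =>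
        have hmem : (ψ : DB) * G z * ↑ψ⁻¹ ∈ EB.gr a := by
          have h1 : (ψ : DB) * G z ∈ EB.gr (0 + a) := EB.mul_mem hψ (hGgr a z hz)
          have h2 : (ψ : DB) * G z * ↑ψ⁻¹ ∈ EB.gr (0 + a + 0) := EB.mul_mem h1 hψinv
          simpa using h2
        rw [EL.der_apply a z hz, EB.der_apply a _ hmem]
        rw [map_sub, map_mul, map_zsmul, map_mul, hGd]
        have e1 : (ψ : DB) * (↑ψ⁻¹ * EB.d * ψ * G z) * ↑ψ⁻¹ =
            EB.d * ((ψ : DB) * G z * ↑ψ⁻¹) := by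
          simp only [← mul_assoc]
          rw [Units.mul_inv, one_mul]
        have e2 : (ψ : DB) * (G z * (↑ψ⁻¹ * EB.d * ψ)) * ↑ψ⁻¹ =
            (ψ : DB) * G z * ↑ψ⁻¹ * EB.d := by
          simp only [← mul_assoc]
          rw [mul_assoc, Units.mul_inv, mul_one]
        rw [mul_sub, sub_mul, mul_smul_comm, smul_mul_assoc, e1, e2]
      | h0 => simp
      | hadd y z hy hz =>
        rw [map_add, map_add, map_add, mul_add, add_mul, mul_add, add_mul, hy, hz, map_add]
    constructor
    · rintro ⟨g, rfl⟩
      exact ⟨F g, (hi g).symm⟩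
    · rintro ⟨y, hy⟩
      refine ⟨(ψ : DB) * G y * ↑ψ⁻¹, ?_⟩
      have : (ψ : DB) * G (F f) * ↑ψ⁻¹ = f := by
        rw [hGF, ← mul_assoc, ← mul_assoc, Units.mul_inv, one_mul, mul_assoc,
          Units.mul_inv, mul_one]
      rw [← hder, hy, this]
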